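/- Let T be a string of length n over an alphabet of size σ, and suppose T[i..i+2ℓ) is a parameterized square. Then the number of positions j ∈ [0..ℓ) such that E(T[1..i+j]) ≠ E(T[1..i+ℓ+j]) is at most |alph(T[i..i+ℓ))| ≤ σ; moreover any such position j is the offset of a leftmost occurrence of some character in T[i..i+ℓ). -/

import Mathlib

/-- The set of distinct characters of a string. -/
def alph (X : List ℤ) : Set ℤ := {a | a ∈ X}

/-- Parameterized matching. -/
def PMatch (X Y : List ℤ) : Prop :=
  X.length = Y.length ∧ ∃ f : ℤ → ℤ, Set.BijOn f (alph X) (alph Y) ∧ X.map f = Y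

/-- E(X) = number of distinct characters of the longest suffix of X[1..|X|-1]
avoiding the character X[|X|]. -/
def Efun (X : List ℤ) : ℤ :=
  match X.getLast? with
  | none => 0
  | some c => ((X.dropLast.reverse.takeWhile (fun a => a != c)).dedup.length : ℤ)

/-- The substring T[i..i+len) for a 1-indexed position i. -/
def seg (T : List ℤ) (i len : ℕ) : List ℤ := (T.drop (i - 1)).take len

lemma my_takeWhile_congr {α} {p q : α → Bool} :
    ∀ {l : List α}, (∀ a ∈ l, p a = q a) → l.takeWhile p = l.takeWhile q
  | [], _ => rfl
  | a :: l, h => by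
    simp only [List.takeWhile_cons, h a List.mem_cons_self]
    cases hq : q a
    · rfl
    · rw [my_takeWhile_congr (fun b hb => h b (List.mem_cons_of_mem a hb))]

lemma my_takeWhile_append_left {α} {p : α → Bool} :
    ∀ {l₁ : List α} (l₂ : List α), (∃ a ∈ l₁, p a = false) →
      (l₁ ++ l₂).takeWhile p = l₁.takeWhile p
  | [], _, h => by simp at h
  | a :: l₁, l₂, h => by
    simp only [List.cons_append, List.takeWhile_cons]
    cases hp : p a
    · rfl
    · rw [my_takeWhile_append_left l₂ ?_]
      obtain ⟨b, hb, hbf⟩ := h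
      rcases List.mem_cons.1 hb with rfl | hb
      · rw [hp] at hbf; exact absurd hbf (by simp)
      · exact ⟨b, hb, hbf⟩

lemma dedup_length_map (f : ℤ → ℤ) (l : List ℤ) (hf : Set.InjOn f {a | a ∈ l}) :
    (l.map f).dedup.length = l.dedup.length := by
  rw [← List.card_toFinset, ← List.card_toFinset]
  have h : (l.map f).toFinset = l.toFinset.image f := by
    ext b; simp [List.mem_map]
  rw [h]
  apply Finset.card_image_of_injOn
  intro a ha b hb
  exact hf (by simpa using ha) (by simpa using hb)

lemma Efun_eq_of_getLast? {X : List ℤ} {c : ℤ} (h : X.getLast? = some c) :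
    Efun X = ((X.dropLast.reverse.takeWhile (fun a => a != c)).dedup.length : ℤ) := by
  unfold Efun; rw [h]

lemma Efun_take (T : List ℤ) (n : ℕ) (h1 : 1 ≤ n) (h2 : n ≤ T.length) :
    Efun (T.take n) =
      (((T.take (n-1)).reverse.takeWhile (fun a => a != T.getD (n-1) 0)).dedup.length : ℤ) := by
  have hlen : (T.take n).length = n := by rw [List.length_take]; omega
  have hlt : n - 1 < T.length := by omega
  have hlast : (T.take n).getLast? = some (T.getD (n-1) 0) := by
    rw [List.getLast?_eq_getElem?, hlen, List.getElem?_take, if_pos (by omega),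
      List.getElem?_eq_getElem hlt, List.getD_eq_getElem T 0 hlt]
  have hdrop : (T.take n).dropLast = T.take (n-1) := by
    rw [List.dropLast_eq_take, hlen, List.take_take]
    congr 1; omega
  rw [Efun_eq_of_getLast? hlast, hdrop]

theorem psquare_prefix_encoding_mismatches
    (T : List ℤ) (σ i ℓ : ℕ)
    (hσ : T.dedup.length ≤ σ)
    (hi : 1 ≤ i) (hℓ : 1 ≤ ℓ) (hbound : i + 2 * ℓ ≤ T.length + 1)
    (hsq : PMatch (seg T i ℓ) (seg T (i + ℓ) ℓ)) :
    let S : Finset ℕ := (Finset.range ℓ).filter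
      (fun j => Efun (T.take (i + j)) ≠ Efun (T.take (i + ℓ + j)))
    S.card ≤ (seg T i ℓ).dedup.length ∧
    (seg T i ℓ).dedup.length ≤ σ ∧
    ∀ j ∈ S, T.getD (i + j - 1) 0 ∉ seg T i j := by
  intro S
  obtain ⟨hlen, f, hbij, hmap⟩ := hsq
  have hTL : i + 2 * ℓ - 1 ≤ T.length := by omega
  -- length of segments
  have hseglen : ∀ k b : ℕ, k - 1 + b ≤ T.length → (seg T k b).length = b := by
    intro k b hb
    simp only [seg, List.length_take, List.length_drop]
    omega
  -- membership of characters in segments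
  have hmem : ∀ a b k : ℕ, 1 ≤ k → a < b → k - 1 + b ≤ T.length →
      T.getD (k + a - 1) 0 ∈ seg T k b := by
    intro a b k hk hab hbl
    have hlb : a < (seg T k b).length := by rw [hseglen k b hbl]; exact hab
    have he : (seg T k b)[a]'hlb = T.getD (k + a - 1) 0 := by
      have h1 : k + a - 1 < T.length := by omega
      simp only [seg, List.getElem_take, List.getElem_drop]
      rw [List.getD_eq_getElem T 0 h1]
      congr 1
      omega
    exact he ▸ List.getElem_mem hlb
  -- value of characters of segments
  have hval : ∀ a b k : ℕ, 1 ≤ k → a < b → k - 1 + b ≤ T.length →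
      ∀ (h : a < (seg T k b).length), (seg T k b)[a]'h = T.getD (k + a - 1) 0 := by
    intro a b k hk hab hbl h
    have h1 : k + a - 1 < T.length := by omega
    simp only [seg, List.getElem_take, List.getElem_drop]
    rw [List.getD_eq_getElem T 0 h1]
    congr 1
    omega
  have hsub1 : ∀ j : ℕ, j ≤ ℓ → seg T i j = (seg T i ℓ).take j := by
    intro j hj
    simp only [seg, List.take_take]
    congr 1; omega
  have hsub2 : ∀ j : ℕ, j ≤ ℓ → seg T (i+ℓ) j = (seg T (i+ℓ) ℓ).take j := by
    intro j hj
    simp only [seg, List.take_take]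
    congr 1; omega
  -- KEY: if the character occurs before, encodings agree
  have key : ∀ j : ℕ, j < ℓ → T.getD (i + j - 1) 0 ∈ seg T i j →
      Efun (T.take (i + j)) = Efun (T.take (i + ℓ + j)) := by
    intro j hj hc
    set c : ℤ := T.getD (i + j - 1) 0 with hcdef
    set c' : ℤ := T.getD (i + ℓ + j - 1) 0 with hc'def
    -- c is the j-th char of first half, c' of second half
    have hjlen1 : j < (seg T i ℓ).length := by rw [hseglen i ℓ (by omega)]; exact hj
    have hjlen2 : j < (seg T (i+ℓ) ℓ).length := by rw [hseglen (i+ℓ) ℓ (by omega)]; exact hj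
    have hcval : (seg T i ℓ)[j]'hjlen1 = c := hval j ℓ i hi hj (by omega) hjlen1
    have hc'val : (seg T (i+ℓ) ℓ)[j]'hjlen2 = c' := hval j ℓ (i+ℓ) (by omega) hj (by omega) hjlen2
    have hc'eq : c' = f c := by
      rw [← hcval, ← hc'val]
      simp only [← hmap, List.getElem_map]
    -- second segment is image of first
    have hsegmap : seg T (i+ℓ) j = (seg T i j).map f := by
      rw [hsub1 j hj.le, hsub2 j hj.le, ← hmap, List.map_take]
    have hcalph : c ∈ alph (seg T i ℓ) := hcval ▸ List.getElem_mem hjlen1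
    have hsubseg : ∀ a : ℤ, a ∈ seg T i j → a ∈ alph (seg T i ℓ) := by
      intro a ha
      rw [hsub1 j hj.le] at ha
      exact List.take_subset _ _ ha
    -- compute first Efun
    have e1 : Efun (T.take (i + j)) =
        ((((seg T i j).reverse.takeWhile (fun a => a != c)).dedup.length : ℤ)) := by
      rw [Efun_take T (i+j) (by omega) (by omega)]
      have hd : T.take (i + j - 1) = T.take (i-1) ++ seg T i j := by
        rw [show i + j - 1 = (i-1) + j by omega, List.take_add]
        rfl
      rw [show T.getD (i + j - 1) 0 = c from rfl, hd, List.reverse_append]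
      rw [my_takeWhile_append_left _ ⟨c, by simpa using hc, by simp⟩]
    have e2 : Efun (T.take (i + ℓ + j)) =
        ((((seg T (i+ℓ) j).reverse.takeWhile (fun a => a != c')).dedup.length : ℤ)) := by
      rw [Efun_take T (i+ℓ+j) (by omega) (by omega)]
      have hd : T.take (i + ℓ + j - 1) = T.take (i+ℓ-1) ++ seg T (i+ℓ) j := by
        rw [show i + ℓ + j - 1 = (i+ℓ-1) + j by omega, List.take_add]
        rfl
      have hc2 : c' ∈ seg T (i+ℓ) j := by
        rw [hsegmap, hc'eq]
        exact List.mem_map_of_mem hc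
      rw [show T.getD (i + ℓ + j - 1) 0 = c' from rfl, hd, List.reverse_append]
      rw [my_takeWhile_append_left _ ⟨c', by simpa using hc2, by simp⟩]
    rw [e1, e2]
    -- now rewrite second takeWhile as image of the first
    have hinj := hbij.injOn
    have hpw : ∀ a ∈ (seg T i j).reverse, ((fun b => b != c') ∘ f) a = (a != c) := by
      intro a ha
      have haseg : a ∈ seg T i j := List.mem_reverse.1 ha
      have haa : a ∈ alph (seg T i ℓ) := hsubseg a haseg
      rw [Function.comp_apply, hc'eq, Bool.eq_iff_iff, bne_iff_ne, bne_iff_ne]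
      constructor
      · intro h h'; exact h (h' ▸ rfl)
      · intro h h'; exact h (hinj haa hcalph h')
    have himg : (seg T (i+ℓ) j).reverse.takeWhile (fun a => a != c') =
        ((seg T i j).reverse.takeWhile (fun a => a != c)).map f := by
      rw [hsegmap, ← List.map_reverse, List.takeWhile_map, my_takeWhile_congr hpw]
    rw [himg]
    norm_cast
    rw [dedup_length_map]
    intro a ha b hb
    have ha' : a ∈ alph (seg T i ℓ) :=
      hsubseg a (List.mem_reverse.1 ((List.takeWhile_sublist _).subset ha))
    have hb' : b ∈ alph (seg T i ℓ) :=
      hsubseg b (List.mem_reverse.1 ((List.takeWhile_sublist _).subset hb))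
    exact hinj ha' hb'
  -- part 3
  have part3 : ∀ j ∈ S, T.getD (i + j - 1) 0 ∉ seg T i j := by
    intro j hj
    simp only [S, Finset.mem_filter, Finset.mem_range] at hj
    exact fun hc => hj.2 (key j hj.1 hc)
  refine ⟨?_, ?_, part3⟩
  · -- part 1
    rw [← List.card_toFinset]
    apply Finset.card_le_card_of_injOn (fun j => T.getD (i + j - 1) 0)
    · intro j hj
      have hj' : j < ℓ := Finset.mem_range.1 (Finset.mem_filter.1 hj).1
      rw [Finset.mem_coe, List.mem_toFinset]
      exact hmem j ℓ i hi hj' (by omega)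
    · intro a ha b hb hab
      simp only at hab
      by_contra hne
      rcases Nat.lt_or_ge a b with h | h
      · have hb' : b < ℓ := Finset.mem_range.1 (Finset.mem_filter.1 hb).1
        have hm := hmem a b i hi h (by omega)
        rw [hab] at hm
        exact part3 b hb hm
      · have h' : b < a := by omega
        have ha' : a < ℓ := Finset.mem_range.1 (Finset.mem_filter.1 ha).1
        have hm := hmem b a i hi h' (by omega)
        rw [← hab] at hm
        exact part3 a ha hm
  · -- part 2
    have hsl : (seg T i ℓ).Sublist T := (List.take_sublist _ _).trans (List.drop_sublist _ _)
    have hss : (seg T i ℓ).toFinset ⊆ T.toFinset := fun x hx =>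
      List.mem_toFinset.2 (hsl.subset (List.mem_toFinset.1 hx))
    calc (seg T i ℓ).dedup.length = (seg T i ℓ).toFinset.card := (List.card_toFinset _).symm
      _ ≤ T.toFinset.card := Finset.card_le_card hss
      _ = T.dedup.length := List.card_toFinset _
      _ ≤ σ := hσ
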